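/- Let $\sigma$ be a probability measure on $\mathbb{R}$ with all finite power moments such that $\int |g|^2 d\sigma > 0$ for every nonzero polynomial $g$. Let $c \ne 0$, $d \ne 0$ be real with $c > -1$, and let $\mathcal{A}$ be the operator on polynomials (viewed in $L^2_\sigma$) given by $\mathcal{A}[p] = [\lambda p(\lambda) + p(0)(c\lambda+d)]$. Then for every positive integer $N$, the operator $\mathcal{A}^N$ is not symmetric with respect to the $L^2_\sigma$ inner product: there exist polynomials $u, v$ with $\int \mathcal{A}^N[u]\,\overline{[v]}\,d\sigma \ne \int [u]\,\overline{\mathcal{A}^N[v]}\,d\sigma$. -/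

import Mathlib

open Polynomial MeasureTheory

theorem stmt_17 (sig : Measure ℝ) [IsProbabilityMeasure sig]
    (hmom : ∀ k : ℕ, Integrable (fun x : ℝ => x ^ k) sig)
    (hnd : ∀ g : Polynomial ℝ, g ≠ 0 → 0 < ∫ x, (g.eval x) ^ 2 ∂sig)
    (c d : ℝ) (hc : -1 < c) (hc0 : c ≠ 0) (hd0 : d ≠ 0)
    (A : Polynomial ℝ → Polynomial ℝ)
    (hA : ∀ p : Polynomial ℝ, A p = X * p + C (p.eval 0) * (C c * X + C d)) :
    ∀ N : ℕ, 0 < N → ∃ u v : Polynomial ℝ,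
      ∫ x, (A^[N] u).eval x * v.eval x ∂sig ≠ ∫ x, u.eval x * (A^[N] v).eval x ∂sig := by
  intro N hN
  obtain ⟨n, rfl⟩ : ∃ n, N = n + 1 := ⟨N - 1, (Nat.succ_pred_eq_of_pos hN).symm⟩
  set φ₁ : Polynomial ℝ := C c * X + C d with hφ₁
  -- key closed formula
  have hkey : ∀ m (p : Polynomial ℝ),
      A^[m+1] p = X^(m+1) * p + C (p.eval 0) * (A^[m] φ₁) := by
    intro m
    induction m with
    | zero =>
      intro p
      rw [zero_add, Function.iterate_one, Function.iterate_zero_apply, hA p, pow_one, hφ₁]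
    | succ k ih =>
      intro p
      rw [show k + 1 + 1 = k + 2 from rfl, Function.iterate_succ_apply, ih (A p), hA p,
        ih φ₁]
      have he : (X * p + C (p.eval 0) * φ₁).eval 0 = p.eval 0 * d := by simp [hφ₁]
      have he1 : φ₁.eval 0 = d := by simp [hφ₁]
      rw [he, he1, map_mul]
      ring
  -- eval at 0
  have heval : ∀ m, (A^[m] φ₁).eval 0 = d^(m+1) := by
    intro m
    induction m with
    | zero => simp [hφ₁]
    | succ k ih =>
      rw [Function.iterate_succ_apply', hA, eval_add, eval_mul, eval_mul, eval_X, eval_C,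
        eval_add, eval_mul, eval_C, eval_X, eval_C, ih]
      ring
  -- integrability of polynomial evaluations
  have hint : ∀ g : Polynomial ℝ, Integrable (fun x => g.eval x) sig := by
    intro g
    induction g using Polynomial.induction_on' with
    | add p q hp hq => simpa [Polynomial.eval_add, Pi.add_def] using hp.add hq
    | monomial k a => simpa [Polynomial.eval_monomial] using (hmom k).const_mul a
  set φ : Polynomial ℝ := A^[n] φ₁ with hφ
  have hφ0 : φ.eval 0 = d^(n+1) := heval n
  have hφne : φ ≠ 0 := by
    intro h
    rw [h] at hφ0
    simp at hφ0
    exact pow_ne_zero _ hd0 hφ0.symm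
  refine ⟨φ, X^2 * φ, ?_⟩
  intro h
  -- rewrite integrands as polynomial evaluations
  have h' : ∫ x, ((A^[n+1] φ) * (X^2 * φ)).eval x ∂sig
      = ∫ x, (φ * (A^[n+1] (X^2 * φ))).eval x ∂sig := by
    simpa [Polynomial.eval_mul] using h
  have hdiff : (A^[n+1] φ) * (X^2 * φ) - φ * (A^[n+1] (X^2 * φ))
      = C (d^(n+1)) * (X * φ)^2 := by
    rw [hkey n φ, hkey n (X^2 * φ), hφ0]
    have : (X^2 * φ).eval 0 = 0 := by simp
    rw [this, map_zero, ← hφ]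
    ring
  have hzero : (0:ℝ) = ∫ x, ((C (d^(n+1)) * (X * φ)^2 : Polynomial ℝ)).eval x ∂sig := by
    rw [← hdiff]
    have := integral_sub (hint ((A^[n+1] φ) * (X^2 * φ))) (hint (φ * (A^[n+1] (X^2 * φ))))
    simp only [Polynomial.eval_sub]
    rw [this, h', sub_self]
  have hpos : 0 < ∫ x, ((X * φ).eval x)^2 ∂sig :=
    hnd _ (mul_ne_zero X_ne_zero hφne)
  rw [show (fun x => ((C (d^(n+1)) * (X * φ)^2 : Polynomial ℝ)).eval x)
      = fun x => d^(n+1) * ((X * φ).eval x)^2 by funext x; simp [Polynomial.eval_pow]] at hzero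
  rw [integral_const_mul] at hzero
  exact (mul_ne_zero (pow_ne_zero _ hd0) (ne_of_gt hpos)) hzero.symm
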